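/- There exists an integer n₀ such that for all n ≥ n₀ the following holds with R = n^{4/7}: for every real x with 2R − 3 ≤ x ≤ 2R, there exist two distinct points of P₃ whose Euclidean distance d satisfies |d − x| ≤ 15·n^{−6/7}; i.e., the pairwise distances of P₃ divide the interval [2R − 3, 2R] into subintervals of length at most 15·n^{−6/7}. -/

import Mathlib

open scoped Real

/-- The radius `R = n^{4/7}` (a real power of the positive integer `n`). -/
noncomputable def Rpow (n : ℕ) : ℝ := (n : ℝ) ^ ((4 : ℝ) / 7)

/-- The set `P₃` of points on the circle of radius `R = n^{4/7}` centered at the origin,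
given in polar coordinates by `p_s = (R, 2s·R⁻¹)` for integers `0 ≤ s ≤ R/2` together
with `q_t = (R, π + 2t·(R⁻¹ + 4·R⁻²))` for integers `0 ≤ t ≤ R/2`; the plane is modeled
by `ℂ`, a polar point `(R, θ)` being `R·exp(θ·I)`. -/
noncomputable def P3 (n : ℕ) : Finset ℂ :=
  letI := Classical.decEq ℂ
  ((Finset.range (⌊Rpow n / 2⌋₊ + 1)).image fun s : ℕ =>
      (Rpow n : ℂ) * Complex.exp ((2 * (s : ℝ) * (Rpow n)⁻¹ : ℝ) * Complex.I)) ∪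
  ((Finset.range (⌊Rpow n / 2⌋₊ + 1)).image fun t : ℕ =>
      (Rpow n : ℂ) *
        Complex.exp
          ((π + 2 * (t : ℝ) * ((Rpow n)⁻¹ + 4 * ((Rpow n ^ 2)⁻¹)) : ℝ) * Complex.I))

lemma exp_I_sub_exp_neg_I (θ : ℝ) :
    Complex.exp ((θ : ℂ) * Complex.I) - Complex.exp (-(θ : ℂ) * Complex.I)
      = 2 * Complex.sin (θ : ℂ) * Complex.I := by
  rw [Complex.exp_mul_I, Complex.exp_mul_I, Complex.cos_neg, Complex.sin_neg]
  ring

lemma chord_abs (a b : ℝ) :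
    ‖Complex.exp ((a : ℝ) * Complex.I) - Complex.exp ((b : ℝ) * Complex.I)‖
      = 2 * |Real.sin ((a - b) / 2)| := by
  have e1 : ((a : ℝ) : ℂ) * Complex.I
      = (((a + b) / 2 : ℝ) : ℂ) * Complex.I + (((a - b) / 2 : ℝ) : ℂ) * Complex.I := by
    push_cast; ring
  have e2 : ((b : ℝ) : ℂ) * Complex.I
      = (((a + b) / 2 : ℝ) : ℂ) * Complex.I + -(((a - b) / 2 : ℝ) : ℂ) * Complex.I := by
    push_cast; ring
  rw [e1, e2, Complex.exp_add, Complex.exp_add, ← mul_sub, exp_I_sub_exp_neg_I]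
  rw [norm_mul, norm_mul, norm_mul, Complex.norm_exp_ofReal_mul_I, Complex.norm_I,
    Complex.norm_two, ← Complex.ofReal_sin, Complex.norm_real, Real.norm_eq_abs]
  ring

lemma dist_polar (R a b : ℝ) (hR : 0 ≤ R) :
    dist ((R : ℂ) * Complex.exp ((a : ℝ) * Complex.I))
      ((R : ℂ) * Complex.exp ((b : ℝ) * Complex.I)) = 2 * R * |Real.sin ((a - b) / 2)| := by
  rw [Complex.dist_eq, ← mul_sub, norm_mul, Complex.norm_real, Real.norm_eq_abs, abs_of_nonneg hR, chord_abs]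
  ring

lemma abs_sin_le_neg {x : ℝ} (h0 : -3 ≤ x) (h1 : x ≤ 0) : |Real.sin x| ≤ -x := by
  have h2 : Real.sin (-x) ≤ -x := Real.sin_le (by linarith)
  have h3 : 0 ≤ Real.sin (-x) :=
    Real.sin_nonneg_of_nonneg_of_le_pi (by linarith) (by linarith [Real.pi_gt_three])
  rw [Real.sin_neg] at h2 h3
  rw [abs_of_nonpos (by linarith)]
  linarith

set_option maxHeartbeats 1000000 in
/-- For all sufficiently large `n`, with `R = n^{4/7}`: every `x ∈ [2R - 3, 2R]` is
within `15·n^{-6/7}` of some distance between two distinct points of `P₃`; i.e. the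
pairwise distances of `P₃` divide `[2R - 3, 2R]` into subintervals of length at most
`15·n^{-6/7}`. -/
theorem P3_distances_dense :
    ∃ n₀ : ℕ, ∀ n : ℕ, n₀ ≤ n →
      ∀ x : ℝ, 2 * Rpow n - 3 ≤ x → x ≤ 2 * Rpow n →
        ∃ u ∈ P3 n, ∃ v ∈ P3 n, u ≠ v ∧
          |dist u v - x| ≤ 15 * (n : ℝ) ^ ((-6 : ℝ) / 7) := by
  classical
  refine ⟨10000, fun n hn x hx1 hx2 => ?_⟩
  set R := Rpow n with hRdef
  have hn4 : (10000 : ℝ) ≤ (n : ℝ) := by exact_mod_cast hn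
  have hn1 : (1 : ℝ) ≤ (n : ℝ) := by linarith
  have hn0 : (0 : ℝ) < (n : ℝ) := by linarith
  have hR100 : (100 : ℝ) ≤ R := by
    have h2 : (10000 : ℝ) ^ ((1 : ℝ)/2) ≤ (n : ℝ) ^ ((1 : ℝ)/2) :=
      Real.rpow_le_rpow (by norm_num) hn4 (by norm_num)
    have h3 : (n : ℝ) ^ ((1 : ℝ)/2) ≤ (n : ℝ) ^ ((4 : ℝ)/7) :=
      Real.rpow_le_rpow_of_exponent_le hn1 (by norm_num)
    have h4 : (10000 : ℝ) ^ ((1 : ℝ)/2) = 100 := by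
      rw [show (10000 : ℝ) = (100 : ℝ) ^ (2 : ℕ) by norm_num,
        ← Real.rpow_natCast (100 : ℝ) 2, ← Real.rpow_mul (by norm_num)]
      norm_num
    rw [hRdef]
    simp only [Rpow]
    linarith
  have hRpos : (0 : ℝ) < R := by linarith
  set ρ := (n : ℝ) ^ ((-6 : ℝ)/7) with hρdef
  have hρpos : 0 < ρ := Real.rpow_pos_of_pos hn0 _
  have hρR : ρ ^ 2 * R ^ 3 = 1 := by
    rw [hρdef, hRdef]
    simp only [Rpow]
    rw [← Real.rpow_natCast ((n : ℝ) ^ ((-6 : ℝ)/7)) 2,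
      ← Real.rpow_natCast ((n : ℝ) ^ ((4 : ℝ)/7)) 3,
      ← Real.rpow_mul hn0.le, ← Real.rpow_mul hn0.le, ← Real.rpow_add hn0]
    norm_num
  clear_value ρ
  set w := Real.sqrt R with hwdef
  have hw2 : w ^ 2 = R := Real.sq_sqrt hRpos.le
  have hwpos : 0 < w := Real.sqrt_pos.mpr hRpos
  have hw10 : (10 : ℝ) ≤ w := by
    have h := Real.sqrt_le_sqrt hR100
    rwa [show Real.sqrt 100 = 10 by
      rw [show (100 : ℝ) = 10 ^ 2 by norm_num, Real.sqrt_sq (by norm_num)]] at h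
  clear_value w
  have hρw : ρ * w ^ 3 = 1 := by
    have hsq : (ρ * w ^ 3) ^ 2 = 1 := by
      have h : (ρ * w ^ 3) ^ 2 = ρ ^ 2 * (w ^ 2) ^ 3 := by ring
      rw [h, hw2, hρR]
    have hpos : 0 < ρ * w ^ 3 := by positivity
    have h0 : (ρ * w ^ 3 - 1) * (ρ * w ^ 3 + 1) = 0 := by linear_combination hsq
    rcases mul_eq_zero.mp h0 with h | h
    · linarith
    · linarith
  -- the target angle u₀
  have hc1 : x / (2 * R) ≤ 1 := by rw [div_le_one (by linarith)]; linarith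
  have h32 : 3 / (2 * R) ≤ 3 / 200 := by
    rw [div_le_div_iff₀ (by linarith) (by norm_num)]; linarith
  have hc0 : (1 : ℝ) - 3 / (2 * R) ≤ x / (2 * R) := by
    rw [le_div_iff₀ (by linarith : (0 : ℝ) < 2 * R)]
    have e : (1 - 3 / (2 * R)) * (2 * R) = 2 * R - 3 := by field_simp
    rw [e]; linarith
  have hcm1 : (-1 : ℝ) ≤ x / (2 * R) := by linarith
  set u₀ := Real.arccos (x / (2 * R)) with hu0def
  have hcu : Real.cos u₀ = x / (2 * R) := Real.cos_arccos hcm1 hc1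
  have hu00 : 0 ≤ u₀ := Real.arccos_nonneg _
  have hu0pi : u₀ ≤ π := Real.arccos_le_pi _
  clear_value u₀
  have hxc : 2 * R * Real.cos u₀ = x := by rw [hcu]; field_simp
  have hu01 : u₀ ≤ 1 := by
    by_contra hcon
    push_neg at hcon
    have h5 : Real.cos u₀ ≤ Real.cos 1 :=
      Real.cos_le_cos_of_nonneg_of_le_pi (by norm_num) hu0pi hcon.le
    have h6 := Real.cos_one_le
    rw [hcu] at h5
    linarith
  have hcb := Real.cos_bound (x := u₀) (by rwa [abs_of_nonneg hu00])
  rw [abs_of_nonneg hu00] at hcb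
  have hcb2 : Real.cos u₀ ≤ 1 - u₀ ^ 2 / 2 + u₀ ^ 4 * (5 / 96) := by
    have h := (abs_le.mp hcb).2
    linarith
  have hu0sq : u₀ ^ 2 * (43 * R) ≤ 144 := by
    have h7 : x ≤ 2 * R * (1 - u₀ ^ 2 / 2 + u₀ ^ 4 * (5 / 96)) := by
      rw [← hxc]
      have := mul_le_mul_of_nonneg_left hcb2 (by linarith : (0 : ℝ) ≤ 2 * R)
      linarith
    have hsq1 : u₀ ^ 2 ≤ 1 := by nlinarith only [hu00, hu01]
    have h8 : u₀ ^ 4 ≤ u₀ ^ 2 := by nlinarith only [sq_nonneg u₀, hsq1]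
    have h9 : 0 ≤ R * (u₀ ^ 2 - u₀ ^ 4) := mul_nonneg hRpos.le (by linarith)
    linarith only [h7, hx1, h9]
  have hu0w : u₀ * w ≤ 1.84 := by
    have hprod : (u₀ * w) ^ 2 * 43 ≤ 144 := by
      have h : (u₀ * w) ^ 2 * 43 = u₀ ^ 2 * (43 * w ^ 2) := by ring
      rw [h, hw2]; linarith
    nlinarith only [sq_nonneg (u₀ * w - 1.84), mul_nonneg hu00 hwpos.le, hprod]
  -- the grid point
  have hkR : 0 ≤ u₀ * R := mul_nonneg hu00 hRpos.le
  set k := ⌈u₀ * R⌉₊ with hkdef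
  have hk1 : u₀ * R ≤ (k : ℝ) := Nat.le_ceil _
  have hk2 : (k : ℝ) ≤ u₀ * R + 1 := by
    have := Nat.ceil_lt_add_one hkR
    linarith
  clear_value k
  have hDpos : 0 ≤ ((k : ℝ) - u₀ * R) * R / 4 :=
    div_nonneg (mul_nonneg (by linarith) hRpos.le) (by norm_num)
  set t := ⌊((k : ℝ) - u₀ * R) * R / 4⌋₊ with htdef
  have ht1 : (t : ℝ) ≤ ((k : ℝ) - u₀ * R) * R / 4 := Nat.floor_le hDpos
  have ht2 : ((k : ℝ) - u₀ * R) * R / 4 < (t : ℝ) + 1 := Nat.lt_floor_add_one _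
  clear_value t
  set s := t + k with hsdef
  clear_value s
  have htR : (t : ℝ) ≤ R / 4 := by nlinarith only [ht1, hk2, hRpos]
  have hkw : (k : ℝ) ≤ 1.84 * w + 1 := by nlinarith only [hk2, hu0w, hw2, hwpos]
  have hsR : (s : ℝ) ≤ R / 2 := by
    have hcast : (s : ℝ) = (t : ℝ) + (k : ℝ) := by rw [hsdef]; push_cast; ring
    rw [hcast, ← hw2]
    nlinarith only [htR, hkw, hw10, hw2, sq_nonneg (w - 10)]
  have hsmem : s ∈ Finset.range (⌊R / 2⌋₊ + 1) := by
    rw [Finset.mem_range, Nat.lt_succ_iff]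
    exact Nat.le_floor hsR
  have htmem : t ∈ Finset.range (⌊R / 2⌋₊ + 1) := by
    rw [Finset.mem_range, Nat.lt_succ_iff]
    exact Nat.le_floor (by linarith only [htR, hRpos] : (t : ℝ) ≤ R / 2)
  -- the half-angle difference
  set a : ℝ := 4 * (t : ℝ) / R ^ 2 - (k : ℝ) / R with hadef
  clear_value a
  have hR2pos : (0 : ℝ) < R ^ 2 := by positivity
  have ha_eq : a + u₀ = (4 * (t : ℝ) - ((k : ℝ) - u₀ * R) * R) / R ^ 2 := by
    rw [hadef]; field_simp; ring
  have ha_ub : a + u₀ ≤ 0 := by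
    rw [ha_eq]
    exact div_nonpos_of_nonpos_of_nonneg (by linarith) hR2pos.le
  have ha_lb : -(4 / R ^ 2) ≤ a + u₀ := by
    rw [ha_eq]
    have h9 : (-4 : ℝ) / R ^ 2 ≤ (4 * (t : ℝ) - ((k : ℝ) - u₀ * R) * R) / R ^ 2 := by
      gcongr
      linarith only [ht2]
    have hnd : -(4 / R ^ 2) = (-4 : ℝ) / R ^ 2 := by ring
    rw [hnd]
    exact h9
  have h4R2 : 4 / R ^ 2 ≤ 1 / 2500 := by
    rw [div_le_div_iff₀ hR2pos (by norm_num)]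
    nlinarith only [hR100]
  have hpi : (3 : ℝ) < π := Real.pi_gt_three
  have hcospos : 0 < Real.cos a := by
    apply Real.cos_pos_of_mem_Ioo
    constructor
    · linarith only [ha_lb, hu01, h4R2, hpi, hu00]
    · linarith only [ha_ub, hu00, hpi]
  -- the distance
  have hdist :
      dist ((R : ℂ) * Complex.exp ((2 * (s : ℝ) * R⁻¹ : ℝ) * Complex.I))
        ((R : ℂ) * Complex.exp ((π + 2 * (t : ℝ) * (R⁻¹ + 4 * ((R ^ 2)⁻¹)) : ℝ) * Complex.I))
        = 2 * R * Real.cos a := by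
    rw [dist_polar _ _ _ hRpos.le]
    have hang : ((2 * (s : ℝ) * R⁻¹) - (π + 2 * (t : ℝ) * (R⁻¹ + 4 * ((R ^ 2)⁻¹)))) / 2
        = -(π / 2 + a) := by
      rw [hadef, hsdef]
      push_cast
      field_simp
      ring
    rw [hang, Real.sin_neg, abs_neg, show π / 2 + a = π / 2 - (-a) by ring,
      Real.sin_pi_div_two_sub, Real.cos_neg, abs_of_nonneg hcospos.le]
  refine ⟨(R : ℂ) * Complex.exp ((2 * (s : ℝ) * R⁻¹ : ℝ) * Complex.I), ?_,
    (R : ℂ) * Complex.exp ((π + 2 * (t : ℝ) * (R⁻¹ + 4 * ((R ^ 2)⁻¹)) : ℝ) * Complex.I), ?_,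
    ?_, ?_⟩
  · exact Finset.mem_union_left _ (Finset.mem_image_of_mem _ hsmem)
  · exact Finset.mem_union_right _ (Finset.mem_image_of_mem _ htmem)
  · have hposd : 0 < dist ((R : ℂ) * Complex.exp ((2 * (s : ℝ) * R⁻¹ : ℝ) * Complex.I))
        ((R : ℂ) * Complex.exp ((π + 2 * (t : ℝ) * (R⁻¹ + 4 * ((R ^ 2)⁻¹)) : ℝ) * Complex.I)) := by
      rw [hdist]
      exact mul_pos (by linarith only [hRpos]) hcospos
    exact dist_pos.mp hposd
  · rw [hdist, ← hxc, ← mul_sub, abs_mul, abs_of_nonneg (by linarith only [hRpos] : (0 : ℝ) ≤ 2 * R)]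
    have hcc : |Real.cos a - Real.cos u₀| ≤ 2 * ((2 / R ^ 2) * (u₀ + 2 / R ^ 2)) := by
      rw [Real.cos_sub_cos, abs_mul, abs_mul]
      have hp1 : |Real.sin ((a + u₀) / 2)| ≤ 2 / R ^ 2 := by
        have h := abs_sin_le_neg (x := (a + u₀) / 2)
          (by linarith only [ha_lb, h4R2]) (by linarith only [ha_ub])
        have h24 : 4 / R ^ 2 = 2 * (2 / R ^ 2) := by ring
        linarith only [h, ha_lb, h24]
      have hq1 : |Real.sin ((a - u₀) / 2)| ≤ u₀ + 2 / R ^ 2 := by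
        have h0 : (-3 : ℝ) ≤ (a - u₀) / 2 := by linarith only [ha_lb, hu01, h4R2, hu00]
        have h1 : (a - u₀) / 2 ≤ 0 := by linarith only [ha_ub, hu00]
        have h := abs_sin_le_neg h0 h1
        have h24 : 4 / R ^ 2 = 2 * (2 / R ^ 2) := by ring
        linarith only [h, ha_lb, h24]
      have habs2 : |(-2 : ℝ)| = 2 := by norm_num
      rw [habs2]
      have hmm := mul_le_mul hp1 hq1 (abs_nonneg _) (by positivity : (0 : ℝ) ≤ 2 / R ^ 2)
      linarith only [hmm]
    have hfin : 2 * R * (2 * ((2 / R ^ 2) * (u₀ + 2 / R ^ 2))) ≤ 15 * ρ := by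
      have hexp : 2 * R * (2 * ((2 / R ^ 2) * (u₀ + 2 / R ^ 2))) = 8 * u₀ / R + 16 / R ^ 3 := by
        field_simp
        ring
      rw [hexp]
      have hρR3 : ρ * R ^ 3 = w ^ 3 := by
        rw [← hw2]
        linear_combination (w ^ 3) * hρw
      have hT2 : 16 / R ^ 3 ≤ (0.28 : ℝ) * ρ := by
        rw [div_le_iff₀ (by positivity)]
        rw [mul_assoc, hρR3]
        have h10 : (10 : ℝ) ^ 3 ≤ w ^ 3 := pow_le_pow_left₀ (by norm_num) hw10 3
        linarith only [h10]
      have hT1 : 8 * u₀ / R ≤ (14.72 : ℝ) * ρ := by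
        rw [div_le_iff₀ hRpos]
        have hρRw : ρ * R * w = 1 := by
          rw [← hw2]
          linear_combination hρw
        have h8 : (8 * u₀) * w ≤ (14.72 * (ρ * R)) * w := by
          have he : (14.72 * (ρ * R)) * w = 14.72 := by
            linear_combination 14.72 * hρRw
          rw [he]
          linarith only [hu0w, hwpos.le]
        have := le_of_mul_le_mul_right h8 hwpos
        linarith only [this]
      linarith only [hT1, hT2, hρpos]
    calc 2 * R * |Real.cos a - Real.cos u₀|
        ≤ 2 * R * (2 * ((2 / R ^ 2) * (u₀ + 2 / R ^ 2))) :=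
          mul_le_mul_of_nonneg_left hcc (by linarith only [hRpos])
      _ ≤ 15 * ρ := hfin
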